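/- Let A be an n×n complex matrix, γ ≥ 0 a real number, and θ ∈ [0, π). If the spectral radius of H(θ) equals γ, then there exists λ ∈ ℂ with |λ| = 1 such that det(R_γ − λS) = 0 and θ = f(Arg(λ)), where Arg(λ) ∈ (−π, π] is the principal argument and f : (−π, π] → [0, π) is defined by f(θ) = θ + π if θ < 0, f(θ) = 0 if θ = 0 or θ = π, and f(θ) = θ otherwise. -/

import Mathlib

open Matrix

/-- The remapping `f : (-π, π] → [0, π)` from equation (2.11) of the paper. -/
noncomputable def remap (x : ℝ) : ℝ :=
  if x < 0 then x + Real.pi else if x = 0 ∨ x = Real.pi then 0 else x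

private lemma arg_exp_real_mul_I {x : ℝ} (h1 : -Real.pi < x) (h2 : x ≤ Real.pi) :
    Complex.arg (Complex.exp ((x : ℂ) * Complex.I)) = x := by
  rw [Complex.exp_mul_I]
  exact Complex.arg_cos_add_sin_mul_I ⟨h1, h2⟩

private lemma det_key (n : ℕ) (A M : Matrix (Fin n) (Fin n) ℂ) (z : ℂ) (hz : z ≠ 0) (γ : ℝ)
    (hEq : (((2*γ:ℝ):ℂ)) • (1 : Matrix (Fin n) (Fin n) ℂ) - z • A - z⁻¹ • Aᴴ = M)
    (hM : M.det = 0) :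
    (Matrix.fromBlocks ((((2*γ:ℝ):ℂ)) • 1) (-Aᴴ) 1 0
      - z • Matrix.fromBlocks A 0 0 1).det = 0 := by
  letI hD : Invertible ((-z) • (1 : Matrix (Fin n) (Fin n) ℂ)) :=
    ⟨(-z⁻¹) • 1, by simp [smul_smul, inv_mul_cancel₀ hz, mul_inv_cancel₀ hz],
      by simp [smul_smul, inv_mul_cancel₀ hz, mul_inv_cancel₀ hz]⟩
  have h1 : z • Matrix.fromBlocks A 0 0 (1 : Matrix (Fin n) (Fin n) ℂ)
      = Matrix.fromBlocks (z • A) 0 0 (z • 1) := by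
    rw [Matrix.fromBlocks_smul]; simp
  rw [h1, sub_eq_add_neg, Matrix.fromBlocks_neg, Matrix.fromBlocks_add]
  have h2 : (0 : Matrix (Fin n) (Fin n) ℂ) + -(z • 1) = (-z) • 1 := by simp
  have h3 : (1 : Matrix (Fin n) (Fin n) ℂ) + -0 = 1 := by simp
  rw [h2, h3, Matrix.det_fromBlocks₂₂]
  have hinv : ⅟((-z) • (1 : Matrix (Fin n) (Fin n) ℂ)) = (-z⁻¹) • 1 := rfl
  rw [hinv]
  simp only [neg_zero, add_zero]
  have h4 : ((((2*γ:ℝ):ℂ)) • 1 + -(z • A)) - (-Aᴴ) * ((-z⁻¹) • 1) * 1 = M := by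
    rw [← hEq]
    simp [Matrix.mul_smul, sub_eq_add_neg]
  rw [h4, hM, mul_zero]

/-- Corollary 2.4. If the spectral radius of `H(θ)` equals `γ ≥ 0`,
then there is a unimodular `λ` with `det(R_γ - λ S) = 0` and `θ = f(Arg λ)`. -/
theorem levelset_remap (n : ℕ) (A : Matrix (Fin n) (Fin n) ℂ) (γ θ : ℝ)
    (hγ : 0 ≤ γ) (hθ1 : 0 ≤ θ) (hθ2 : θ < Real.pi)
    (H : Matrix (Fin n) (Fin n) ℂ)
    (hH : H = (2⁻¹ : ℂ) •
      (Complex.exp ((θ : ℂ) * Complex.I) • A + Complex.exp (-(θ : ℂ) * Complex.I) • Aᴴ))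
    (R : Matrix (Fin n ⊕ Fin n) (Fin n ⊕ Fin n) ℂ)
    (hR : R = Matrix.fromBlocks (((2 * γ : ℝ) : ℂ) • 1) (-Aᴴ) 1 0)
    (S : Matrix (Fin n ⊕ Fin n) (Fin n ⊕ Fin n) ℂ)
    (hS : S = Matrix.fromBlocks A 0 0 1)
    -- `ρ(H(θ)) = γ` : some real eigenvalue of the Hermitian matrix `H(θ)` has absolute
    -- value `γ`, and every real eigenvalue has absolute value at most `γ`.
    (hrad1 : ∃ c : ℝ, |c| = γ ∧ (H - (c : ℂ) • 1).det = 0)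
    (hrad2 : ∀ c : ℝ, (H - (c : ℂ) • 1).det = 0 → |c| ≤ γ) :
    ∃ z : ℂ, ‖z‖ = 1 ∧ (R - z • S).det = 0 ∧ θ = remap (Complex.arg z) := by
  obtain ⟨c, hc, hdet⟩ := hrad1
  have hpi : -Real.pi < θ := lt_of_lt_of_le (neg_neg_of_pos Real.pi_pos) hθ1
  rcases (abs_eq hγ).mp hc with h | h
  · -- c = γ : take z = exp(θ i)
    refine ⟨Complex.exp ((θ : ℂ) * Complex.I), Complex.norm_exp_ofReal_mul_I θ, ?_, ?_⟩
    · rw [hR, hS]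
      refine det_key n A ((-2:ℂ) • (H - ((c:ℝ):ℂ) • 1)) _ (Complex.exp_ne_zero _) γ ?_ ?_
      · rw [← Complex.exp_neg, ← neg_mul, hH, h]
        push_cast
        module
      · rw [Matrix.det_smul, hdet, mul_zero]
    · rw [arg_exp_real_mul_I hpi hθ2.le, remap, if_neg (not_lt.2 hθ1)]
      by_cases h0 : θ = 0
      · rw [if_pos (Or.inl h0), h0]
      · rw [if_neg (by push_neg; exact ⟨h0, ne_of_lt hθ2⟩)]
  · -- c = -γ : take z = -exp(θ i)
    refine ⟨-Complex.exp ((θ : ℂ) * Complex.I), by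
      simp [Complex.norm_exp_ofReal_mul_I θ], ?_, ?_⟩
    · rw [hR, hS]
      refine det_key n A ((2:ℂ) • (H - ((c:ℝ):ℂ) • 1)) _
        (neg_ne_zero.2 (Complex.exp_ne_zero _)) γ ?_ ?_
      · rw [inv_neg, ← Complex.exp_neg, ← neg_mul, hH, h]
        push_cast
        module
      · rw [Matrix.det_smul, hdet, mul_zero]
    · by_cases h0 : θ = 0
      · subst h0
        have : -Complex.exp ((0:ℝ) * Complex.I) = -1 := by norm_num
        rw [this, Complex.arg_neg_one, remap,
          if_neg (not_lt.2 Real.pi_pos.le), if_pos (Or.inr rfl)]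
      · have hz : -Complex.exp ((θ : ℂ) * Complex.I)
            = Complex.exp (((θ - Real.pi : ℝ) : ℂ) * Complex.I) := by
          push_cast
          rw [sub_mul, Complex.exp_sub, Complex.exp_pi_mul_I]
          ring
        have hθ0 : 0 < θ := lt_of_le_of_ne hθ1 (Ne.symm h0)
        rw [hz, arg_exp_real_mul_I (by linarith) (by linarith), remap,
          if_pos (by linarith)]
        ring
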